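/- arXiv:0910.1272 — 3 statements merged into one kernel-verified Lean document; each statement's English description precedes it below -/
import Mathlib

section
/- Let N be a positive integer, let s be a positive integer, let f : ℝ → ℝ be a continuously differentiable function with f ≥ 0, and let a : ℝ → ℝ be a continuously differentiable function with a(t) > 0 for all t in an open interval I. Define ρ(t,x) = f((1/a(t)^s) · Σ_{i=1}^N x_i^s) / a(t)^N and u(t,x) = (a'(t)/a(t)) · x for t ∈ I and x ∈ ℝ^N. Then ρ and u satisfy the continuity equation ∂ρ/∂t (t,x) + Σ_{i=1}^N ∂/∂x_i (ρ(t,x) u_i(t,x)) = 0 for all t ∈ I and x ∈ ℝ^N. -/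
/-- The solution `ρ(t,x) = f((1/a(t)^s) Σ xᵢ^s)/a(t)^N`, `u(t,x) = (a'(t)/a(t)) x`
satisfies the continuity equation `ρ_t + Σᵢ ∂(ρ uᵢ)/∂xᵢ = 0`. -/
theorem continuity_equation_separation
    (N s : ℕ) (hN : 0 < N) (hs : 0 < s)
    (f : ℝ → ℝ) (hf : ContDiff ℝ 1 f) (hf_nonneg : ∀ y, 0 ≤ f y)
    (a : ℝ → ℝ) (ha : ContDiff ℝ 1 a)
    (t₁ t₂ : ℝ) (I : Set ℝ) (hI : I = Set.Ioo t₁ t₂)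
    (ha_pos : ∀ t ∈ I, 0 < a t)
    (ρ : ℝ → (Fin N → ℝ) → ℝ) (u : ℝ → (Fin N → ℝ) → Fin N → ℝ)
    (hρ : ∀ t x, ρ t x = f ((1 / (a t) ^ s) * ∑ i, (x i) ^ s) / (a t) ^ N)
    (hu : ∀ t x i, u t x i = (deriv a t / a t) * x i) :
    ∀ t ∈ I, ∀ x : Fin N → ℝ,
      deriv (fun τ => ρ τ x) t
        + ∑ i, deriv (fun y => ρ t (Function.update x i y)
            * u t (Function.update x i y) i) (x i) = 0 := by
  obtain ⟨m, rfl⟩ : ∃ m, s = m + 1 := ⟨s - 1, (Nat.succ_pred_eq_of_pos hs).symm⟩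
  obtain ⟨n, rfl⟩ : ∃ n, N = n + 1 := ⟨N - 1, (Nat.succ_pred_eq_of_pos hN).symm⟩
  intro t ht x
  have hApos : 0 < a t := ha_pos t ht
  have hAne : a t ≠ 0 := hApos.ne'
  have hf' : ∀ y, HasDerivAt f (deriv f y) y :=
    fun y => (hf.differentiable one_ne_zero y).hasDerivAt
  have hA : HasDerivAt a (deriv a t) t := (ha.differentiable one_ne_zero t).hasDerivAt
  set A := a t with hAdef
  set A' := deriv a t with hA'def
  set S := ∑ i, (x i) ^ (m + 1) with hSdef
  set g := (1 / A ^ (m + 1)) * S with hgdef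
  -- time derivative
  have h_inv : HasDerivAt (fun τ => 1 / a τ ^ (m + 1))
      ((0 * A ^ (m + 1) - 1 * (↑(m + 1) * A ^ m * A')) / (A ^ (m + 1)) ^ 2) t := by
    simpa using (hasDerivAt_const t (1 : ℝ)).fun_div (hA.pow (m + 1)) (pow_ne_zero _ hAne)
  have h_mul : HasDerivAt (fun τ => (1 / a τ ^ (m + 1)) * S)
      (((0 * A ^ (m + 1) - 1 * (↑(m + 1) * A ^ m * A')) / (A ^ (m + 1)) ^ 2) * S) t :=
    h_inv.mul_const S
  have h_f : HasDerivAt (fun τ => f ((1 / a τ ^ (m + 1)) * S))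
      (deriv f g * (((0 * A ^ (m + 1) - 1 * (↑(m + 1) * A ^ m * A')) / (A ^ (m + 1)) ^ 2) * S)) t :=
    (hf' g).comp t h_mul
  have h_time : HasDerivAt (fun τ => f ((1 / a τ ^ (m + 1)) * S) / a τ ^ (n + 1))
      ((deriv f g * (((0 * A ^ (m + 1) - 1 * (↑(m + 1) * A ^ m * A')) / (A ^ (m + 1)) ^ 2) * S)
          * A ^ (n + 1) - f g * (↑(n + 1) * A ^ n * A')) / (A ^ (n + 1)) ^ 2) t :=
    h_f.div (hA.pow (n + 1)) (pow_ne_zero _ hAne)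
  have hT : deriv (fun τ => ρ τ x) t
      = (deriv f g * (((0 * A ^ (m + 1) - 1 * (↑(m + 1) * A ^ m * A')) / (A ^ (m + 1)) ^ 2) * S)
          * A ^ (n + 1) - f g * (↑(n + 1) * A ^ n * A')) / (A ^ (n + 1)) ^ 2 := by
    simp only [hρ]
    exact h_time.deriv
  -- spatial derivatives
  have hsum : ∀ (i : Fin (n + 1)) (y : ℝ),
      ∑ j, (Function.update x i y j) ^ (m + 1)
        = y ^ (m + 1) + ∑ j ∈ Finset.univ \ {i}, (x j) ^ (m + 1) := by
    intro i y
    have : ∀ j, (Function.update x i y j) ^ (m + 1)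
        = Function.update (fun k => (x k) ^ (m + 1)) i (y ^ (m + 1)) j :=
      fun j => Function.apply_update (fun _ v => v ^ (m + 1)) x i y j
    exact (Finset.sum_congr rfl (fun j _ => this j)).trans
      (Finset.sum_update_of_mem (Finset.mem_univ i) _ _)
  have key : ∀ i : Fin (n + 1),
      deriv (fun y => ρ t (Function.update x i y) * u t (Function.update x i y) i) (x i)
        = (deriv f g * (↑(m + 1)) * A' / (A ^ (m + 1) * A ^ (n + 1) * A)) * (x i) ^ (m + 1)
          + f g * A' / (A ^ (n + 1) * A) := by
    intro i
    set C := ∑ j ∈ Finset.univ \ {i}, (x j) ^ (m + 1) with hCdef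
    have hSC : S = (x i) ^ (m + 1) + C := by
      have h := hsum i (x i)
      simp only [Function.update_eq_self] at h
      rw [hSdef]
      exact h
    have hfun : (fun y => ρ t (Function.update x i y) * u t (Function.update x i y) i)
        = fun y => f ((1 / A ^ (m + 1)) * (y ^ (m + 1) + C)) / A ^ (n + 1) * ((A' / A) * y) := by
      funext y
      rw [hρ, hu, Function.update_self, hsum i y]
    rw [hfun]
    have hgC : g = (1 / A ^ (m + 1)) * ((x i) ^ (m + 1) + C) := by rw [hgdef, hSC]
    have h_in : HasDerivAt (fun y => (1 / A ^ (m + 1)) * (y ^ (m + 1) + C))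
        ((1 / A ^ (m + 1)) * (↑(m + 1) * (x i) ^ m)) (x i) := by
      simpa using (((hasDerivAt_pow (m + 1) (x i)).add_const C).const_mul (1 / A ^ (m + 1)))
    have h_p : HasDerivAt (fun y => f ((1 / A ^ (m + 1)) * (y ^ (m + 1) + C)) / A ^ (n + 1))
        (deriv f g * ((1 / A ^ (m + 1)) * (↑(m + 1) * (x i) ^ m)) / A ^ (n + 1)) (x i) := by
      rw [hgC]
      exact (((hf' _).comp (x i) h_in)).div_const _
    have h_q : HasDerivAt (fun y => (A' / A) * y) (A' / A) (x i) := by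
      simpa using (hasDerivAt_id (x i)).const_mul (A' / A)
    have h_pq : HasDerivAt (fun y => f ((1 / A ^ (m + 1)) * (y ^ (m + 1) + C)) / A ^ (n + 1) * ((A' / A) * y)) _ (x i) := h_p.mul h_q
    rw [h_pq.deriv, hgC]
    push_cast
    field_simp
    ring
  rw [hT]
  simp only [key]
  rw [Finset.sum_add_distrib, ← Finset.mul_sum, ← hSdef, Finset.sum_const, Finset.card_univ,
    Fintype.card_fin, nsmul_eq_mul]
  push_cast
  field_simp
  ring
end

section
/- Let N be a positive integer, let s be a positive integer, let f : ℝ → ℝ be a continuously differentiable function with f ≥ 0, let a₁ > 0 and a₂ be real constants, and set a(t) = a₁ + a₂ t. Let I be an open interval containing 0 on which a(t) > 0. Define ρ(t,x) = f((1/a(t)^s) · Σ_{i=1}^N x_i^s) / a(t)^N and u(t,x) = (a'(t)/a(t)) · x on I × ℝ^N. Then (ρ, u) is a solution of the pressureless Euler equations: for all t ∈ I and x ∈ ℝ^N, both ∂ρ/∂t + Σ_{i=1}^N ∂(ρ u_i)/∂x_i = 0 and ρ(t,x) · (∂u/∂t (t,x) + (u(t,x)·∇)u(t,x)) = 0 hold.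 -/
/-- With `a(t) = a₁ + a₂ t`, the pair `ρ(t,x) = f((1/a(t)^s) Σ xᵢ^s)/a(t)^N`,
`u(t,x) = (a'(t)/a(t)) x` solves the pressureless Euler equations. -/
theorem pressureless_euler_exact_solution
    (N s : ℕ) (hN : 0 < N) (hs : 0 < s)
    (f : ℝ → ℝ) (hf : ContDiff ℝ 1 f) (hf_nonneg : ∀ y, 0 ≤ f y)
    (a₁ a₂ : ℝ) (ha₁ : 0 < a₁)
    (a : ℝ → ℝ) (ha : ∀ t, a t = a₁ + a₂ * t)
    (t₁ t₂ : ℝ) (I : Set ℝ) (hI : I = Set.Ioo t₁ t₂) (h0I : (0 : ℝ) ∈ I)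
    (ha_pos : ∀ t ∈ I, 0 < a t)
    (ρ : ℝ → (Fin N → ℝ) → ℝ) (u : ℝ → (Fin N → ℝ) → Fin N → ℝ)
    (hρ : ∀ t x, ρ t x = f ((1 / (a t) ^ s) * ∑ i, (x i) ^ s) / (a t) ^ N)
    (hu : ∀ t x i, u t x i = (deriv a t / a t) * x i) :
    ∀ t ∈ I, ∀ x : Fin N → ℝ,
      (deriv (fun τ => ρ τ x) t
        + ∑ i, deriv (fun y => ρ t (Function.update x i y)
            * u t (Function.update x i y) i) (x i) = 0)
      ∧ (∀ i : Fin N,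
          ρ t x * (deriv (fun τ => u τ x i) t
            + ∑ j, u t x j * deriv (fun y => u t (Function.update x j y) i) (x j)) = 0) := by
  obtain ⟨m, rfl⟩ : ∃ m, s = m + 1 := ⟨s - 1, (Nat.succ_pred_eq_of_pos hs).symm⟩
  obtain ⟨n, rfl⟩ : ∃ n, N = n + 1 := ⟨N - 1, (Nat.succ_pred_eq_of_pos hN).symm⟩
  have haf : a = fun τ => a₁ + a₂ * τ := funext ha
  have hder : ∀ τ : ℝ, HasDerivAt a a₂ τ := by
    intro τ
    rw [haf]
    simpa using ((hasDerivAt_id τ).const_mul a₂).const_add a₁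
  have hda : ∀ τ, deriv a τ = a₂ := fun τ => (hder τ).deriv
  intro t ht x
  have hA : 0 < a t := ha_pos t ht
  have hAne : a t ≠ 0 := hA.ne'
  have hfd : ∀ y, HasDerivAt f (deriv f y) y :=
    fun y => (hf.differentiable one_ne_zero y).hasDerivAt
  have hupd : ∀ (i : Fin (n + 1)) (y : ℝ),
      (∑ j, (Function.update x i y j) ^ (m + 1))
        = (∑ j, x j ^ (m + 1)) - x i ^ (m + 1) + y ^ (m + 1) := by
    intro i y
    rw [Finset.sum_eq_sum_sdiff_singleton_add (Finset.mem_univ i)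
        (fun j => (Function.update x i y j) ^ (m + 1)),
      Finset.sum_eq_sum_sdiff_singleton_add (Finset.mem_univ i) (fun j => x j ^ (m + 1))]
    have h3 : ∑ j ∈ Finset.univ \ {i}, (Function.update x i y j) ^ (m + 1)
        = ∑ j ∈ Finset.univ \ {i}, x j ^ (m + 1) :=
      Finset.sum_congr rfl fun j hj => by
        rw [Function.update_of_ne (by simpa using (Finset.mem_sdiff.mp hj).2)]
    rw [h3, Function.update_self]
    ring
  constructor
  · -- continuity equation
    have hpow : HasDerivAt (fun τ => (a τ) ^ (m + 1)) ((m + 1 : ℝ) * a t ^ m * a₂) t := by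
      simpa using (hder t).fun_pow (m + 1)
    have hinv : HasDerivAt (fun τ => ((a τ) ^ (m + 1))⁻¹)
        (-((m + 1 : ℝ) * a t ^ m * a₂) / (a t ^ (m + 1)) ^ 2) t :=
      hpow.inv (pow_ne_zero _ hAne)
    have harg := hinv.mul_const (∑ i, x i ^ (m + 1))
    have hcf : HasDerivAt (fun τ => f (((a τ) ^ (m + 1))⁻¹ * ∑ i, x i ^ (m + 1)))
        (deriv f ((a t ^ (m + 1))⁻¹ * ∑ i, x i ^ (m + 1))
          * (-((m + 1 : ℝ) * a t ^ m * a₂) / (a t ^ (m + 1)) ^ 2 * ∑ i, x i ^ (m + 1))) t :=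
      (hfd _).comp t harg
    have hpowN : HasDerivAt (fun τ => (a τ) ^ (n + 1)) ((n + 1 : ℝ) * a t ^ n * a₂) t := by
      simpa using (hder t).fun_pow (n + 1)
    have hT := hcf.fun_div hpowN (pow_ne_zero _ hAne)
    have heqT : (fun τ => ρ τ x)
        = fun τ => f (((a τ) ^ (m + 1))⁻¹ * ∑ i, x i ^ (m + 1)) / (a τ) ^ (n + 1) := by
      funext τ; rw [hρ, one_div]
    -- spatial derivatives
    have hSp : ∀ i : Fin (n + 1),
        deriv (fun y => ρ t (Function.update x i y) * u t (Function.update x i y) i) (x i)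
        = deriv f ((a t ^ (m + 1))⁻¹ * ∑ j, x j ^ (m + 1))
            * ((a t ^ (m + 1))⁻¹ * ((m + 1 : ℝ) * x i ^ m)) / a t ^ (n + 1)
            * (a₂ / a t * x i)
          + f ((a t ^ (m + 1))⁻¹ * ∑ j, x j ^ (m + 1)) / a t ^ (n + 1) * (a₂ / a t) := by
      intro i
      have heqS : (fun y => ρ t (Function.update x i y) * u t (Function.update x i y) i)
          = fun y => f ((a t ^ (m + 1))⁻¹
              * ((∑ j, x j ^ (m + 1)) - x i ^ (m + 1) + y ^ (m + 1))) / a t ^ (n + 1)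
              * (a₂ / a t * y) := by
        funext y
        rw [hρ, hu, hupd, hda, Function.update_self, one_div]
      have hg : HasDerivAt
          (fun y => (a t ^ (m + 1))⁻¹ * ((∑ j, x j ^ (m + 1)) - x i ^ (m + 1) + y ^ (m + 1)))
          ((a t ^ (m + 1))⁻¹ * ((m + 1 : ℝ) * x i ^ m)) (x i) := by
        simpa using ((hasDerivAt_pow (m + 1) (x i)).const_add
          ((∑ j, x j ^ (m + 1)) - x i ^ (m + 1))).const_mul ((a t ^ (m + 1))⁻¹)
      have hcf2 : HasDerivAt
          (fun y => f ((a t ^ (m + 1))⁻¹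
            * ((∑ j, x j ^ (m + 1)) - x i ^ (m + 1) + y ^ (m + 1))))
          (deriv f ((a t ^ (m + 1))⁻¹
              * ((∑ j, x j ^ (m + 1)) - x i ^ (m + 1) + (x i) ^ (m + 1)))
            * ((a t ^ (m + 1))⁻¹ * ((m + 1 : ℝ) * x i ^ m))) (x i) :=
        (hfd _).comp (x i) hg
      have hlin : HasDerivAt (fun y : ℝ => a₂ / a t * y) (a₂ / a t) (x i) := by
        simpa using (hasDerivAt_id (x i)).const_mul (a₂ / a t)
      have hprod := (hcf2.div_const (a t ^ (n + 1))).fun_mul hlin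
      have hgv : (a t ^ (m + 1))⁻¹ * ((∑ j, x j ^ (m + 1)) - x i ^ (m + 1) + (x i) ^ (m + 1))
          = (a t ^ (m + 1))⁻¹ * ∑ j, x j ^ (m + 1) := by ring
      rw [heqS, hprod.deriv, hgv]
    rw [heqT, hT.deriv, Finset.sum_congr rfl fun i _ => hSp i]
    have hone : ∀ i : Fin (n + 1),
        deriv f ((a t ^ (m + 1))⁻¹ * ∑ j, x j ^ (m + 1))
            * ((a t ^ (m + 1))⁻¹ * ((m + 1 : ℝ) * x i ^ m)) / a t ^ (n + 1)
            * (a₂ / a t * x i)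
          + f ((a t ^ (m + 1))⁻¹ * ∑ j, x j ^ (m + 1)) / a t ^ (n + 1) * (a₂ / a t)
        = (deriv f ((a t ^ (m + 1))⁻¹ * ∑ j, x j ^ (m + 1))
            * (a t ^ (m + 1))⁻¹ * (m + 1 : ℝ) / a t ^ (n + 1) * (a₂ / a t)) * x i ^ (m + 1)
          + f ((a t ^ (m + 1))⁻¹ * ∑ j, x j ^ (m + 1)) / a t ^ (n + 1) * (a₂ / a t) :=
      fun i => by ring
    rw [Finset.sum_congr rfl fun i _ => hone i, Finset.sum_add_distrib, ← Finset.mul_sum,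
      Finset.sum_const, Finset.card_univ, Fintype.card_fin, nsmul_eq_mul]
    push_cast
    field_simp
    ring
  · -- momentum equation
    intro i
    have hDt : deriv (fun τ => u τ x i) t = ((0 * a t - a₂ * a₂) / a t ^ 2) * x i := by
      have heq : (fun τ => u τ x i) = fun τ => a₂ / a τ * x i := by
        funext τ; rw [hu, hda]
      rw [heq]
      exact (((hasDerivAt_const t a₂).div (hder t) hAne).mul_const (x i)).deriv
    have hDx : ∀ j : Fin (n + 1), deriv (fun y => u t (Function.update x j y) i) (x j)
        = if i = j then a₂ / a t else 0 := by
      intro j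
      have heq : (fun y => u t (Function.update x j y) i)
          = fun y => (a₂ / a t) * (if i = j then y else x i) := by
        funext y; rw [hu, hda, Function.update_apply]
      rw [heq]
      by_cases h : i = j
      · simp only [h, if_pos rfl]
        simpa using ((hasDerivAt_id (x j)).const_mul (a₂ / a t)).deriv
      · simp [h]
    have hsum : ∑ j, u t x j * deriv (fun y => u t (Function.update x j y) i) (x j)
        = u t x i * (a₂ / a t) := by
      rw [Finset.sum_congr rfl fun j _ => by rw [hDx j]]
      rw [Finset.sum_eq_single i]
      · simp
      · intro j _ hj; simp [Ne.symm hj]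
      · intro h; exact absurd (Finset.mem_univ i) h
    rw [hDt, hsum, hu, hda]
    have hz : (0 * a t - a₂ * a₂) / a t ^ 2 * x i + a₂ / a t * x i * (a₂ / a t) = 0 := by
      field_simp
      ring
    rw [hz, mul_zero]
end

section
/- Let N be a positive integer, let s be a positive integer, let f : ℝ → ℝ be a continuously differentiable function with f ≥ 0, let a₁ > 0 and a₂ be real constants, set a(t) = a₁ + a₂ t, and let I be an open interval on which a(t) > 0. Define ρ(t,x) = f((1/a(t)^s) · Σ_{i=1}^N x_i^s) / a(t)^N and u(t,x) = (a'(t)/a(t)) · x on I × ℝ^N, and let μ > 0 be a constant. Then (ρ, u) is a solution of the pressureless Navier–Stokes equations: for all t ∈ I and x ∈ ℝ^N, both ∂ρ/∂t + Σ_{i=1}^N ∂(ρ u_i)/∂x_i = 0 and ρ(t,x) · (∂u/∂t (t,x) + (u(t,x)·∇)u(t,x)) = μ · ∇(∇·u)(t,x) hold. -/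
/-- With `a(t) = a₁ + a₂ t`, the pair `ρ(t,x) = f((1/a(t)^s) Σ xᵢ^s)/a(t)^N`,
`u(t,x) = (a'(t)/a(t)) x` solves the pressureless Navier–Stokes equations
`ρ_t + ∇·(ρ u) = 0`, `ρ (u_t + (u·∇)u) = μ ∇(∇·u)`. -/
theorem pressureless_navier_stokes_exact_solution
    (N s : ℕ) (hN : 0 < N) (hs : 0 < s)
    (f : ℝ → ℝ) (hf : ContDiff ℝ 1 f) (hf_nonneg : ∀ y, 0 ≤ f y)
    (a₁ a₂ : ℝ) (ha₁ : 0 < a₁)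
    (a : ℝ → ℝ) (ha : ∀ t, a t = a₁ + a₂ * t)
    (t₁ t₂ : ℝ) (I : Set ℝ) (hI : I = Set.Ioo t₁ t₂)
    (ha_pos : ∀ t ∈ I, 0 < a t)
    (μ : ℝ) (hμ : 0 < μ)
    (ρ : ℝ → (Fin N → ℝ) → ℝ) (u : ℝ → (Fin N → ℝ) → Fin N → ℝ)
    (hρ : ∀ t x, ρ t x = f ((1 / (a t) ^ s) * ∑ i, (x i) ^ s) / (a t) ^ N)
    (hu : ∀ t x i, u t x i = (deriv a t / a t) * x i) :
    ∀ t ∈ I, ∀ x : Fin N → ℝ,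
      (deriv (fun τ => ρ τ x) t
        + ∑ i, deriv (fun y => ρ t (Function.update x i y)
            * u t (Function.update x i y) i) (x i) = 0)
      ∧ (∀ i : Fin N,
          ρ t x * (deriv (fun τ => u τ x i) t
            + ∑ j, u t x j * deriv (fun y => u t (Function.update x j y) i) (x j))
          = μ * deriv (fun y => ∑ j, deriv
              (fun z => u t (Function.update (Function.update x i y) j z) j)
              (Function.update x i y j)) (x i)) := by
  obtain ⟨m, rfl⟩ : ∃ m, s = m + 1 := ⟨s - 1, (Nat.succ_pred_eq_of_pos hs).symm⟩
  obtain ⟨n, rfl⟩ : ∃ n, N = n + 1 := ⟨N - 1, (Nat.succ_pred_eq_of_pos hN).symm⟩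
  intro t ht x
  have hfd : Differentiable ℝ f := hf.differentiable one_ne_zero
  set A : ℝ := a t with hAdef
  have hA : 0 < A := ha_pos t ht
  have hAne : A ≠ 0 := ne_of_gt hA
  have hAms : A ^ (m + 1) ≠ 0 := pow_ne_zero _ hAne
  have hAnN : A ^ (n + 1) ≠ 0 := pow_ne_zero _ hAne
  -- derivative of a
  have haD : ∀ τ : ℝ, HasDerivAt a a₂ τ := by
    intro τ
    have h1 : HasDerivAt (fun τ : ℝ => a₁ + a₂ * τ) a₂ τ := by
      simpa using ((hasDerivAt_id τ).const_mul a₂).const_add a₁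
    exact h1.congr_of_eventuallyEq (Filter.Eventually.of_forall ha)
  set c : ℝ := ∑ i, (x i) ^ (m + 1) with hc
  set S : ℝ := (A ^ (m + 1))⁻¹ * c with hS
  -- time derivative of ρ
  have h2 : HasDerivAt (fun τ => (a τ) ^ (m + 1))
      ((m + 1 : ℕ) * A ^ m * a₂) t := by
    simpa using (show HasDerivAt (fun τ => (a τ) ^ (m + 1)) _ t from (haD t).pow (m + 1))
  have h3 : HasDerivAt (fun τ => ((a τ) ^ (m + 1))⁻¹)
      (-((m + 1 : ℕ) * A ^ m * a₂) / (A ^ (m + 1)) ^ 2) t := h2.inv hAms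
  have h4 : HasDerivAt (fun τ => ((a τ) ^ (m + 1))⁻¹ * c)
      (-((m + 1 : ℕ) * A ^ m * a₂) / (A ^ (m + 1)) ^ 2 * c) t := h3.mul_const c
  have h5 : HasDerivAt f (deriv f S) S := (hfd S).hasDerivAt
  have h6 : HasDerivAt (fun τ => f (((a τ) ^ (m + 1))⁻¹ * c))
      (deriv f S * (-((m + 1 : ℕ) * A ^ m * a₂) / (A ^ (m + 1)) ^ 2 * c)) t :=
    h5.comp t h4
  have h7 : HasDerivAt (fun τ => (a τ) ^ (n + 1))
      ((n + 1 : ℕ) * A ^ n * a₂) t := by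
    simpa using (show HasDerivAt (fun τ => (a τ) ^ (n + 1)) _ t from (haD t).pow (n + 1))
  have h8 : HasDerivAt (fun τ => f (((a τ) ^ (m + 1))⁻¹ * c) / (a τ) ^ (n + 1))
      ((deriv f S * (-((m + 1 : ℕ) * A ^ m * a₂) / (A ^ (m + 1)) ^ 2 * c)
          * A ^ (n + 1)
        - f S * ((n + 1 : ℕ) * A ^ n * a₂)) / (A ^ (n + 1)) ^ 2) t :=
    h6.div h7 hAnN
  have ht_deriv : deriv (fun τ => ρ τ x) t
      = (deriv f S * (-((m + 1 : ℕ) * A ^ m * a₂) / (A ^ (m + 1)) ^ 2 * c)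
          * A ^ (n + 1)
        - f S * ((n + 1 : ℕ) * A ^ n * a₂)) / (A ^ (n + 1)) ^ 2 := by
    have hfe : (fun τ => ρ τ x)
        = fun τ => f (((a τ) ^ (m + 1))⁻¹ * c) / (a τ) ^ (n + 1) := by
      funext τ; rw [hρ, one_div]
    rw [hfe]; exact h8.deriv
  -- spatial derivatives (continuity)
  have hx_deriv : ∀ i : Fin (n + 1), deriv (fun y => ρ t (Function.update x i y)
      * u t (Function.update x i y) i) (x i)
      = (x i ^ m * x i)
          * (deriv f S * ((A ^ (m + 1))⁻¹ * (m + 1 : ℕ)) / A ^ (n + 1) * (a₂ / A))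
        + f S / A ^ (n + 1) * (a₂ / A) := by
    intro i
    set ci : ℝ := ∑ j ∈ Finset.univ \ {i}, (x j) ^ (m + 1) with hci
    have hsum : ∀ y : ℝ, ∑ j, (Function.update x i y j) ^ (m + 1)
        = y ^ (m + 1) + ci := by
      intro y
      have h1 : ∑ j ∈ Finset.univ \ {i}, (Function.update x i y j) ^ (m + 1)
          = ci :=
        Finset.sum_congr rfl fun j hj => by
          rw [Function.update_of_ne
            (Finset.notMem_singleton.mp (Finset.mem_sdiff.mp hj).2)]
      rw [Finset.sum_eq_sum_sdiff_singleton_add (Finset.mem_univ i)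
        (fun j => (Function.update x i y j) ^ (m + 1)), h1,
        Function.update_self, add_comm]
    have hci_c : (x i) ^ (m + 1) + ci = c := by
      rw [hc, hci]
      rw [Finset.sum_eq_sum_sdiff_singleton_add (Finset.mem_univ i)
        (fun j => (x j) ^ (m + 1))]
      ring
    have hfe : (fun y => ρ t (Function.update x i y)
        * u t (Function.update x i y) i)
        = fun y => f ((A ^ (m + 1))⁻¹ * (y ^ (m + 1) + ci)) / A ^ (n + 1)
            * (a₂ / A * y) := by
      funext y
      rw [hρ, hu, hsum, one_div, (haD t).deriv, Function.update_self, ← hAdef]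
    have p1 : HasDerivAt (fun y : ℝ => y ^ (m + 1))
        ((m + 1 : ℕ) * (x i) ^ m) (x i) := by simpa using hasDerivAt_pow (m + 1) (x i)
    have p3 : HasDerivAt (fun y : ℝ => (A ^ (m + 1))⁻¹ * (y ^ (m + 1) + ci))
        ((A ^ (m + 1))⁻¹ * ((m + 1 : ℕ) * (x i) ^ m)) (x i) :=
      (p1.add_const ci).const_mul _
    have hval : (A ^ (m + 1))⁻¹ * ((x i) ^ (m + 1) + ci) = S := by rw [hci_c]
    have p4 : HasDerivAt (fun y : ℝ => f ((A ^ (m + 1))⁻¹ * (y ^ (m + 1) + ci)))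
        (deriv f S * ((A ^ (m + 1))⁻¹ * ((m + 1 : ℕ) * (x i) ^ m))) (x i) := by
      have := (hfd _).hasDerivAt.comp (x i) p3
      rwa [hval] at this
    have p5 := p4.div_const (A ^ (n + 1))
    have p6 : HasDerivAt (fun y : ℝ => a₂ / A * y) (a₂ / A) (x i) := by
      simpa using (hasDerivAt_id (x i)).const_mul (a₂ / A)
    have p7 : HasDerivAt (fun y : ℝ => f ((A ^ (m + 1))⁻¹ * (y ^ (m + 1) + ci)) / A ^ (n + 1)
        * (a₂ / A * y)) _ (x i) := p5.mul p6
    rw [hfe, p7.deriv, hval]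
    ring
  -- inner divergence derivatives (used in momentum)
  have huder : ∀ (w : Fin (n + 1) → ℝ) (j : Fin (n + 1)) (p : ℝ),
      deriv (fun z => u t (Function.update w j z) j) p = a₂ / A := by
    intro w j p
    have : (fun z => u t (Function.update w j z) j) = fun z => a₂ / A * z := by
      funext z
      rw [hu, (haD t).deriv, Function.update_self, ← hAdef]
    rw [this]
    exact (by simpa using (hasDerivAt_id p).const_mul (a₂ / A) :
      HasDerivAt (fun z : ℝ => a₂ / A * z) (a₂ / A) p).deriv
  constructor
  · -- continuity equation
    rw [ht_deriv]
    rw [Finset.sum_congr rfl fun i _ => hx_deriv i]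
    rw [Finset.sum_add_distrib, ← Finset.sum_mul, Finset.sum_const,
      Finset.card_univ, Fintype.card_fin]
    have hsum1 : ∑ i, x i ^ m * x i = c := by
      rw [hc]; exact Finset.sum_congr rfl fun i _ => (pow_succ (x i) m).symm
    rw [hsum1, nsmul_eq_mul]
    push_cast
    field_simp
    ring
  · -- momentum equation
    intro i
    -- time derivative of u
    have hane : a₁ + a₂ * t ≠ 0 := by rw [← ha t]; exact hAne
    have q0 : HasDerivAt (fun τ : ℝ => a₁ + a₂ * τ) a₂ t := by
      simpa using ((hasDerivAt_id t).const_mul a₂).const_add a₁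
    have q1 : HasDerivAt (fun τ : ℝ => a₂ / (a₁ + a₂ * τ))
        ((0 * (a₁ + a₂ * t) - a₂ * a₂) / (a₁ + a₂ * t) ^ 2) t :=
      (hasDerivAt_const t a₂).div q0 hane
    have hut : deriv (fun τ => u τ x i) t
        = (0 * (a₁ + a₂ * t) - a₂ * a₂) / (a₁ + a₂ * t) ^ 2 * x i := by
      have hfe : (fun τ => u τ x i) = fun τ => a₂ / (a₁ + a₂ * τ) * x i := by
        funext τ
        rw [hu, (haD τ).deriv, ha τ]
      rw [hfe]
      exact (q1.mul_const (x i)).deriv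
    -- spatial derivatives of u
    have hux : ∀ j : Fin (n + 1), deriv (fun y => u t (Function.update x j y) i) (x j)
        = if j = i then a₂ / A else 0 := by
      intro j
      rcases eq_or_ne j i with rfl | h
      · simp only [if_pos rfl]
        exact huder x j (x j)
      · have : (fun y => u t (Function.update x j y) i) = fun _ => a₂ / A * x i := by
          funext y
          rw [hu, (haD t).deriv, Function.update_of_ne (Ne.symm h), ← hAdef]
        rw [this, if_neg h]
        exact deriv_const _ _
    -- RHS is zero
    have hrhs : (fun y => ∑ j, deriv
        (fun z => u t (Function.update (Function.update x i y) j z) j)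
        (Function.update x i y j))
        = fun _ : ℝ => ∑ _j : Fin (n + 1), a₂ / A := by
      funext y
      exact Finset.sum_congr rfl fun j _ => huder _ j _
    rw [hrhs, deriv_const, hut]
    rw [Finset.sum_congr rfl fun j _ => by rw [hux j]]
    have hsum2 : ∑ j, u t x j * (if j = i then a₂ / A else 0) = u t x i * (a₂ / A) := by
      rw [Finset.sum_congr rfl fun j _ => mul_ite (j = i) (u t x j) (a₂ / A) 0]
      simp
    rw [hsum2, hu, (haD t).deriv, ← hAdef]
    have hAeq : a₁ + a₂ * t = A := (ha t).symm
    rw [hAeq]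
    field_simp
    ring
end
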